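/- arXiv:2109.05970 — 6 statements merged into one kernel-verified Lean document; each statement's English description precedes it below -/
import Mathlib

section
/- Let S_λ be a proper bounded weighted shift on a directed forest T=(V,p) and let k ≥ 1. Then the operator S_λ^k is hyponormal if and only if both of the following hold: (a) the forest T^k is leafless, i.e. V = p^[k](V); and (b) for every v ∈ V, h_k(v) := ∑_{u ∈ Chi^⟨k⟩(v)} |λ^(k)_u|² / ‖S_λ^k e_u‖² ≤ 1. -/
open scoped ENNReal Classical
noncomputable section

universe u

namespace ShiftsPaper

/-- ℓ²(V) over ℂ. -/
abbrev Hs (V : Type u) : Type u := lp (fun _ : V => ℂ) 2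

/-- canonical orthonormal basis vector -/
def ev {V : Type u} (v : V) : Hs V := lp.single 2 v 1

/-- A directed forest: a nonempty vertex set together with a parent function `p`
such that any vertex lying on a `p`-cycle is a fixed point of `p`. -/
def IsDirectedForest {V : Type u} (p : V → V) : Prop :=
  Nonempty V ∧ ∀ n : ℕ, 1 ≤ n → ∀ v : V, p^[n] v = v → p v = v

def rootSet {V : Type u} (p : V → V) : Set V := {v | p v = v}

def children {V : Type u} (p : V → V) (v : V) : Set V := {u | p u = v ∧ u ≠ v}

/-- the set of `k`-th children `Chi^⟨k⟩(v)` -/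
def childrenIter {V : Type u} (p : V → V) : ℕ → V → Set V
  | 0, v => {v}
  | k + 1, v => {u | p^[k + 1] u = v ∧ p^[k] u ≠ v}

/-- descendants -/
def des {V : Type u} (p : V → V) (v : V) : Set V := ⋃ n : ℕ, childrenIter p n v

lemma self_mem_des {V : Type u} (p : V → V) (v : V) : v ∈ des p v :=
  Set.mem_iUnion.2 ⟨0, by simp [childrenIter]⟩

/-- `u` and `v` belong to the same tree (connected component) of the forest -/
def sameTree {V : Type u} (p : V → V) (u v : V) : Prop :=
  ∃ m n : ℕ, p^[m] u = p^[n] v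

/-- A directed tree is a connected directed forest. -/
def IsDirectedTree {V : Type u} (p : V → V) : Prop :=
  IsDirectedForest p ∧ ∀ u v : V, sameTree p u v

def Leafless {V : Type u} (p : V → V) : Prop := Function.Surjective p

def LocallyCountable {V : Type u} (p : V → V) : Prop :=
  ∀ v : V, (children p v).Countable

/-- every non-root vertex has exactly one child -/
def Forkless {V : Type u} (p : V → V) : Prop :=
  ∀ v : V, p v ≠ v → ∃! u : V, u ∈ children p v

/-- a system of weights: vanishing at the roots -/
def WeightSystem {V : Type u} (p : V → V) (lam : V → ℂ) : Prop :=
  ∀ v : V, p v = v → lam v = 0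

/-- a proper system of weights: vanishing exactly at the roots -/
def ProperWeights {V : Type u} (p : V → V) (lam : V → ℂ) : Prop :=
  ∀ v : V, lam v = 0 ↔ p v = v

/-- `S` is the (bounded) weighted shift on the forest `(V, p)` with weights `lam`:
`(S f)(v) = lam v • f (p v)`. -/
def IsWeightedShift {V : Type u} (p : V → V) (lam : V → ℂ)
    (S : Hs V →L[ℂ] Hs V) : Prop :=
  ∀ (f : Hs V) (v : V), (S f : ∀ _ : V, ℂ) v = lam v * (f : ∀ _ : V, ℂ) (p v)

def Hyponormal {E : Type u} [NormedAddCommGroup E] [InnerProductSpace ℂ E]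
    [CompleteSpace E] (A : E →L[ℂ] E) : Prop :=
  (ContinuousLinearMap.adjoint A ∘L A - A ∘L ContinuousLinearMap.adjoint A).IsPositive

def PowerHyponormal {E : Type u} [NormedAddCommGroup E] [InnerProductSpace ℂ E]
    [CompleteSpace E] (A : E →L[ℂ] E) : Prop :=
  ∀ n : ℕ, 1 ≤ n → Hyponormal (A ^ n)

/-- `A` is subnormal: it is the restriction of a bounded normal operator on a larger
Hilbert space to an invariant subspace. -/
def Subnormal {E : Type u} [NormedAddCommGroup E] [InnerProductSpace ℂ E]
    [CompleteSpace E] (A : E →L[ℂ] E) : Prop :=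
  ∃ (K : Type u) (_ : NormedAddCommGroup K) (_ : InnerProductSpace ℂ K)
    (_ : CompleteSpace K) (J : E →ₗᵢ[ℂ] K) (N : K →L[ℂ] K),
    IsStarNormal N ∧ ∀ x : E, N (J x) = J (A x)

/-- `μ` is a representing measure (a positive Borel measure on `[0,∞)`) for the
sequence `a`. -/
def IsRepresentingMeasure (μ : MeasureTheory.Measure ℝ) (a : ℕ → ℝ) : Prop :=
  μ (Set.Iio 0) = 0 ∧
    ∀ n : ℕ, ENNReal.ofReal (a n) = ∫⁻ x : ℝ, ENNReal.ofReal (x ^ n) ∂μ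

def IsStieltjesMomentSeq (a : ℕ → ℝ) : Prop :=
  (∀ n, 0 ≤ a n) ∧ ∃ μ : MeasureTheory.Measure ℝ, IsRepresentingMeasure μ a

/-- parent function of the `k`-step backward extension `T⟨k⟩`; the new vertices
`ω_1, …, ω_k` are encoded as `Sum.inr ⟨0⟩, …, Sum.inr ⟨k-1⟩`. -/
def extParent {V : Type u} (p : V → V) (ω : V) (k : ℕ) :
    V ⊕ Fin k → V ⊕ Fin k
  | Sum.inl v =>
      if v = ω then (if h : 0 < k then Sum.inr ⟨0, h⟩ else Sum.inl ω)
      else Sum.inl (p v)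
  | Sum.inr j =>
      if h : (j : ℕ) + 1 < k then Sum.inr ⟨(j : ℕ) + 1, h⟩ else Sum.inr j

/-- weights on `T⟨k⟩`: weight `mu 0 = λ'_{ω_0}` at the old root `ω`, weight
`mu (j+1) = λ'_{ω_{j+1}}` at `ω_{j+1}` for `j+1 < k`, weight `0` at the new root `ω_k`. -/
def extWeights {V : Type u} (lam : V → ℂ) (ω : V) (k : ℕ) (mu : Fin k → ℂ) :
    V ⊕ Fin k → ℂ
  | Sum.inl v => if v = ω then (if h : 0 < k then mu ⟨0, h⟩ else 0) else lam v
  | Sum.inr j => if h : (j : ℕ) + 1 < k then mu ⟨(j : ℕ) + 1, h⟩ else 0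

/-- `S` (the weighted shift with weights `lam` on a tree rooted at `ω`) admits a
subnormal `k`-step backward extension. -/
def AdmitsSubnormalBackExt {V : Type u} (p : V → V) (lam : V → ℂ) (ω : V)
    (S : Hs V →L[ℂ] Hs V) (k : ℕ) : Prop :=
  Subnormal S ∧
    ∃ mu : Fin k → ℂ, (∀ j, mu j ≠ 0) ∧
      ∃ S' : Hs (V ⊕ Fin k) →L[ℂ] Hs (V ⊕ Fin k),
        IsWeightedShift (extParent p ω k) (extWeights lam ω k mu) S' ∧ Subnormal S'

def AdmitsPowerHypoBackExt {V : Type u} (p : V → V) (lam : V → ℂ) (ω : V)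
    (S : Hs V →L[ℂ] Hs V) (k : ℕ) : Prop :=
  PowerHyponormal S ∧
    ∃ mu : Fin k → ℂ, (∀ j, mu j ≠ 0) ∧
      ∃ S' : Hs (V ⊕ Fin k) →L[ℂ] Hs (V ⊕ Fin k),
        IsWeightedShift (extParent p ω k) (extWeights lam ω k mu) S' ∧
        PowerHyponormal S'

/-- the parent function of the subforest `T|_W`. -/
def restrictParent {V : Type u} (p : V → V) (W : Set V) : W → W :=
  fun v => if h : p ↑v ∈ W then ⟨p ↑v, h⟩ else v

/-- the weights `λ→_u` on the subtree `T_(u→)` of descendants of `u`. -/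
def subWeights {V : Type u} (lam : V → ℂ) (u : V) (W : Set V) : W → ℂ :=
  fun v => if (v : V) = u then 0 else lam ↑v

/-- parent function of the rooted sum of the family `{(V j, p j)}` with roots `ω j`;
the new root is `none`. -/
def rsParent {J : Type u} {V : J → Type u} (p : ∀ j, V j → V j) (ω : ∀ j, V j) :
    Option (Σ j, V j) → Option (Σ j, V j)
  | none => none
  | some ⟨j, v⟩ => if v = ω j then none else some ⟨j, p j v⟩

/-- weights on the rooted sum: `0` at the new root, `θ j` at the old root `ω j`. -/
def rsWeights {J : Type u} {V : J → Type u} (lam : ∀ j, V j → ℂ) (ω : ∀ j, V j)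
    (θ : J → ℂ) : Option (Σ j, V j) → ℂ
  | none => 0
  | some ⟨j, v⟩ => if v = ω j then θ j else lam j v

/-- iterated weights `λ^(k)_v`. -/
def iterWeight {V : Type u} (p : V → V) (lam : V → ℂ) : ℕ → V → ℂ
  | 0, _ => 1
  | k + 1, v => iterWeight p lam k (p v) * lam v

/-- parent function `p^[k]` of the `k`-th power forest `T^k`. -/
def kPowParent {V : Type u} (p : V → V) (k : ℕ) (v : V) : V :=
  if p (p^[k - 1] v) = p^[k - 1] v then v else p^[k] v


lemma ev_apply {V : Type u} (v w : V) : (ev v : ∀ _ : V, ℂ) w = if w = v then 1 else 0 := by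
  classical
  simp [ev, lp.single_apply, Pi.single_apply]

lemma coord_eq_inner {V : Type u} (f : Hs V) (v : V) :
    (f : ∀ _ : V, ℂ) v = inner (𝕜 := ℂ) (ev v) f := by
  classical
  rw [ev, lp.inner_single_left]
  simp [RCLike.inner_apply]

lemma inner_tsum {V : Type u} (f g : Hs V) :
    inner (𝕜 := ℂ) f g = ∑' v, (starRingEnd ℂ) ((f : ∀ _ : V, ℂ) v) * (g : ∀ _ : V, ℂ) v := by
  rw [lp.inner_eq_tsum]
  simp only [RCLike.inner_apply']

lemma hyponormal_iff {E : Type u} [NormedAddCommGroup E] [InnerProductSpace ℂ E]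
    [CompleteSpace E] (A : E →L[ℂ] E) :
    Hyponormal A ↔ ∀ x : E, ‖ContinuousLinearMap.adjoint A x‖ ≤ ‖A x‖ := by
  classical
  have hsa : IsSelfAdjoint (ContinuousLinearMap.adjoint A ∘L A - A ∘L ContinuousLinearMap.adjoint A) := by
    rw [ContinuousLinearMap.isSelfAdjoint_iff']
    simp [ContinuousLinearMap.adjoint_comp]
  have hre : ∀ x : E, (ContinuousLinearMap.adjoint A ∘L A - A ∘L ContinuousLinearMap.adjoint A).reApplyInnerSelf x
      = ‖A x‖ ^ 2 - ‖ContinuousLinearMap.adjoint A x‖ ^ 2 := by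
    intro x
    rw [ContinuousLinearMap.reApplyInnerSelf_apply]
    simp only [ContinuousLinearMap.sub_apply, ContinuousLinearMap.comp_apply, inner_sub_left]
    have h1 : inner (𝕜 := ℂ) ((ContinuousLinearMap.adjoint A) (A x)) x = inner (𝕜 := ℂ) (A x) (A x) := by
      rw [ContinuousLinearMap.adjoint_inner_left]
    have h2 : inner (𝕜 := ℂ) (A ((ContinuousLinearMap.adjoint A) x)) x
        = inner (𝕜 := ℂ) ((ContinuousLinearMap.adjoint A) x) ((ContinuousLinearMap.adjoint A) x) :=
      (ContinuousLinearMap.adjoint_inner_right A _ _).symm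
    rw [h1, h2, map_sub, inner_self_eq_norm_sq (𝕜 := ℂ),
      inner_self_eq_norm_sq (𝕜 := ℂ) ((ContinuousLinearMap.adjoint A) x)]
  constructor
  · intro h x
    have := h.2 x
    rw [hre x] at this
    nlinarith [norm_nonneg (A x), norm_nonneg (ContinuousLinearMap.adjoint A x)]
  · intro h
    refine ⟨hsa.isSymmetric, fun x => ?_⟩
    rw [hre x]
    nlinarith [h x, norm_nonneg (A x), norm_nonneg (ContinuousLinearMap.adjoint A x)]


-- ENNReal Cauchy-Schwarz via Holder with counting measure
lemma ennreal_cs {ι : Type u} (a b : ι → ℝ≥0∞) :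
    (∑' i, a i * b i) ^ 2 ≤ (∑' i, a i ^ 2) * (∑' i, b i ^ 2) := by
  classical
  letI : MeasurableSpace ι := ⊤
  have hpq : Real.HolderConjugate 2 2 := by
    rw [Real.holderConjugate_iff]; norm_num
  have ha : AEMeasurable a (MeasureTheory.Measure.count) := .of_discrete
  have hb : AEMeasurable b (MeasureTheory.Measure.count) := .of_discrete
  have H := ENNReal.lintegral_mul_le_Lp_mul_Lq
    (MeasureTheory.Measure.count (α := ι)) hpq ha hb
  have hc : ∀ g : ι → ℝ≥0∞, MeasureTheory.lintegral MeasureTheory.Measure.count g = ∑' i, g i :=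
    fun g => MeasureTheory.lintegral_count g
  rw [hc, hc, hc] at H
  have hsq : ∀ x y : ℝ≥0∞, x ≤ y → x ^ 2 ≤ y ^ 2 := fun x y h => pow_le_pow_left' h 2
  calc (∑' i, a i * b i) ^ 2
      ≤ ((∑' i, a i ^ (2:ℝ)) ^ ((1:ℝ)/2) * (∑' i, b i ^ (2:ℝ)) ^ ((1:ℝ)/2)) ^ 2 := hsq _ _ H
    _ = (∑' i, a i ^ 2) * (∑' i, b i ^ 2) := by
        rw [mul_pow]
        have h2 : ∀ c : ι → ℝ≥0∞, ((∑' i, c i ^ (2:ℝ)) ^ ((1:ℝ)/2)) ^ 2 = ∑' i, c i ^ 2 := by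
          intro c
          rw [← ENNReal.rpow_natCast (_ ^ ((1:ℝ)/2)) 2, ← ENNReal.rpow_mul]
          have h12 : (1:ℝ)/2 * (2:ℕ) = 1 := by norm_num
          rw [h12, ENNReal.rpow_one]
          congr 1
          funext i
          rw [← ENNReal.rpow_natCast (c i) 2]
          norm_num
        rw [h2 a, h2 b]

lemma ennreal_cs' {ι : Type u} (c A B : ι → ℝ≥0∞) (h : ∀ i, c i ^ 2 ≤ A i * B i) :
    (∑' i, c i) ^ 2 ≤ (∑' i, A i) * (∑' i, B i) := by
  have key : ∀ i, c i ≤ A i ^ ((1:ℝ)/2) * B i ^ ((1:ℝ)/2) := by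
    intro i
    have h1 : (c i ^ 2) ^ ((1:ℝ)/2) ≤ (A i * B i) ^ ((1:ℝ)/2) :=
      ENNReal.rpow_le_rpow (h i) (by norm_num)
    have h2 : (c i ^ 2 : ℝ≥0∞) ^ ((1:ℝ)/2) = c i := by
      rw [← ENNReal.rpow_natCast (c i) 2, ← ENNReal.rpow_mul]
      norm_num
    have h3 : (A i * B i) ^ ((1:ℝ)/2) = A i ^ ((1:ℝ)/2) * B i ^ ((1:ℝ)/2) :=
      ENNReal.mul_rpow_of_nonneg _ _ (by norm_num)
    rw [h2, h3] at h1; exact h1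
  have hsq : ∀ (g : ι → ℝ≥0∞) i, (g i ^ ((1:ℝ)/2)) ^ 2 = g i := by
    intro g i
    rw [← ENNReal.rpow_natCast (_ ^ ((1:ℝ)/2)) 2, ← ENNReal.rpow_mul]
    norm_num
  calc (∑' i, c i) ^ 2 ≤ (∑' i, A i ^ ((1:ℝ)/2) * B i ^ ((1:ℝ)/2)) ^ 2 := by
        exact pow_le_pow_left' (ENNReal.tsum_le_tsum key) 2
    _ ≤ (∑' i, (A i ^ ((1:ℝ)/2)) ^ 2) * (∑' i, (B i ^ ((1:ℝ)/2)) ^ 2) := ennreal_cs _ _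
    _ = (∑' i, A i) * (∑' i, B i) := by simp only [hsq]

-- fiber decomposition of an ENNReal tsum
lemma tsum_fiber {ι : Type u} (q : ι → ι) (g : ι → ℝ≥0∞) :
    ∑' w, g w = ∑' v, ∑' w, (if q w = v then g w else 0) := by
  rw [ENNReal.tsum_comm (f := fun v w => if q w = v then g w else 0)]
  congr 1
  funext w
  simp only [eq_comm (a := q w)]
  exact (tsum_ite_eq (q w) (fun _ => g w)).symm


def N2 {V : Type u} (f : Hs V) : ℝ≥0∞ := ∑' v, (‖(f : ∀ _ : V, ℂ) v‖₊ : ℝ≥0∞) ^ 2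

lemma coe_nnnorm_sq (x : ℂ) : ((‖x‖₊ : ℝ≥0∞)) ^ 2 = ENNReal.ofReal (‖x‖ ^ 2) := by
  rw [ENNReal.ofReal_pow (norm_nonneg x), ← enorm_eq_nnnorm, ofReal_norm]

lemma N2_eq {V : Type u} (f : Hs V) : N2 f = ENNReal.ofReal (‖f‖ ^ 2) := by
  have htR : (0:ℝ) < (2 : ℝ≥0∞).toReal := by norm_num
  have h1 : ‖f‖ ^ ((2 : ℝ≥0∞).toReal) = ∑' v, ‖(f : ∀ _ : V, ℂ) v‖ ^ ((2 : ℝ≥0∞).toReal) :=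
    lp.norm_rpow_eq_tsum htR f
  have ht2 : ((2 : ℝ≥0∞).toReal) = ((2:ℕ):ℝ) := by norm_num
  have hsummable : Summable (fun v => ‖(f : ∀ _ : V, ℂ) v‖ ^ ((2 : ℝ≥0∞).toReal)) :=
    (lp.memℓp f).summable htR
  have : ENNReal.ofReal (‖f‖ ^ ((2 : ℝ≥0∞).toReal))
      = ∑' v, ENNReal.ofReal (‖(f : ∀ _ : V, ℂ) v‖ ^ ((2 : ℝ≥0∞).toReal)) := by
    rw [h1]
    exact ENNReal.ofReal_tsum_of_nonneg
      (fun v => Real.rpow_nonneg (norm_nonneg _) _) hsummable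
  rw [ht2] at this
  simp only [Real.rpow_natCast] at this
  rw [N2, this]
  congr 1
  funext v
  rw [coe_nnnorm_sq]

lemma norm_le_iff_N2 {V : Type u} (f g : Hs V) : ‖f‖ ≤ ‖g‖ ↔ N2 f ≤ N2 g := by
  rw [N2_eq, N2_eq]
  rw [ENNReal.ofReal_le_ofReal_iff (by positivity)]
  constructor
  · intro h; exact pow_le_pow_left₀ (norm_nonneg f) h 2
  · intro h; exact le_of_pow_le_pow_left₀ (by norm_num) (norm_nonneg g) h

lemma enorm_tsum_le {ι : Type u} (g : ι → ℂ) :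
    (‖∑' i, g i‖₊ : ℝ≥0∞) ≤ ∑' i, (‖g i‖₊ : ℝ≥0∞) := by
  by_cases h : (∑' i, (‖g i‖₊ : ℝ≥0∞)) = ⊤
  · rw [h]; exact le_top
  · have hs : Summable (fun i => ‖g i‖₊) := ENNReal.tsum_coe_ne_top_iff_summable.1 h
    rw [← ENNReal.coe_tsum hs]
    exact_mod_cast nnnorm_tsum_le hs


section Shift
variable {V : Type u} {p : V → V} {lam : V → ℂ} {S : Hs V →L[ℂ] Hs V}

lemma pow_coord (hS : IsWeightedShift p lam S) (k : ℕ) (f : Hs V) (v : V) :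
    ((S ^ k) f : ∀ _ : V, ℂ) v = iterWeight p lam k v * (f : ∀ _ : V, ℂ) (p^[k] v) := by
  induction k generalizing f v with
  | zero => simp [iterWeight]
  | succ k ih =>
      rw [pow_succ']
      have : ((S * S ^ k) f) = S ((S ^ k) f) := rfl
      rw [this, hS ((S ^ k) f) v, ih f (p v), iterWeight, Function.iterate_succ_apply]
      ring

lemma iterWeight_eq_zero (hproper : ProperWeights p lam) {k : ℕ} (hk : 1 ≤ k) (v : V) :
    iterWeight p lam k v = 0 ↔ p (p^[k - 1] v) = p^[k - 1] v := by
  induction k, hk using Nat.le_induction generalizing v with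
  | base => simpa [iterWeight] using hproper v
  | succ k hk ih =>
      show iterWeight p lam k (p v) * lam v = 0 ↔ _
      rw [mul_eq_zero, ih (p v), hproper v]
      have harr : p^[k - 1] (p v) = p^[k + 1 - 1] v := by
        rw [← Function.iterate_succ_apply]
        congr 1
        omega
      rw [harr]
      constructor
      · rintro (h | h)
        · exact h
        · have : p^[k + 1 - 1] v = v := Function.iterate_fixed h _
          rw [this]; exact h
      · intro h; exact Or.inl h

/-- fiber weight sum -/
def Wfib {V : Type u} (p : V → V) (lam : V → ℂ) (k : ℕ) (u : V) : ℝ≥0∞ :=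
  ∑' w, (if p^[k] w = u then (‖iterWeight p lam k w‖₊ : ℝ≥0∞) ^ 2 else 0)

lemma N2_pow_ev (hS : IsWeightedShift p lam S) (k : ℕ) (u : V) :
    N2 ((S ^ k) (ev u)) = Wfib p lam k u := by
  rw [N2, Wfib]
  congr 1
  funext w
  rw [pow_coord hS k (ev u) w, ev_apply]
  by_cases h : p^[k] w = u
  · simp [h]
  · simp [h]

lemma N2_pow (hS : IsWeightedShift p lam S) (k : ℕ) (f : Hs V) :
    N2 ((S ^ k) f) = ∑' v, (‖(f : ∀ _ : V, ℂ) v‖₊ : ℝ≥0∞) ^ 2 * Wfib p lam k v := by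
  rw [N2]
  have h1 : ∀ w : V, (‖((S ^ k) f : ∀ _ : V, ℂ) w‖₊ : ℝ≥0∞) ^ 2
      = (‖iterWeight p lam k w‖₊ : ℝ≥0∞) ^ 2 * (‖(f : ∀ _ : V, ℂ) (p^[k] w)‖₊ : ℝ≥0∞) ^ 2 := by
    intro w
    rw [pow_coord hS k f w]
    push_cast [nnnorm_mul]
    ring
  simp only [h1]
  rw [tsum_fiber (fun w => p^[k] w)
    (fun w => (‖iterWeight p lam k w‖₊ : ℝ≥0∞) ^ 2 * (‖(f : ∀ _ : V, ℂ) (p^[k] w)‖₊ : ℝ≥0∞) ^ 2)]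
  congr 1
  funext v
  rw [Wfib, ← ENNReal.tsum_mul_left]
  congr 1
  funext w
  by_cases h : p^[k] w = v
  · simp [h]; ring
  · simp [h]

lemma adj_coord (hS : IsWeightedShift p lam S) (k : ℕ) (f : Hs V) (w : V) :
    ((ContinuousLinearMap.adjoint (S ^ k)) f : ∀ _ : V, ℂ) w
      = ∑' x, (if p^[k] x = w then (starRingEnd ℂ) (iterWeight p lam k x) * (f : ∀ _ : V, ℂ) x else 0) := by
  rw [coord_eq_inner]
  rw [ContinuousLinearMap.adjoint_inner_right]
  rw [inner_tsum]
  congr 1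
  funext x
  rw [pow_coord hS k (ev w) x, ev_apply]
  by_cases h : p^[k] x = w
  · simp [h]
  · simp [h]

end Shift


section Main
variable {V : Type u} {p : V → V} {lam : V → ℂ} {S : Hs V →L[ℂ] Hs V}

lemma norm_eq_zero_of_N2 {f : Hs V} (h : N2 f = 0) : ‖f‖ = 0 := by
  rw [N2_eq] at h
  have := ENNReal.ofReal_eq_zero.1 h
  nlinarith [norm_nonneg f, sq_nonneg ‖f‖]

lemma adj_coord_ev (hS : IsWeightedShift p lam S) (k : ℕ) (u : V) :
    ((ContinuousLinearMap.adjoint (S ^ k)) (ev u) : ∀ _ : V, ℂ) (p^[k] u)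
      = (starRingEnd ℂ) (iterWeight p lam k u) := by
  rw [adj_coord hS k (ev u) (p^[k] u)]
  rw [tsum_eq_single u]
  · simp [ev_apply]
  · intro x hx
    rw [ev_apply, if_neg hx]
    simp

lemma keylemma (hS : IsWeightedShift p lam S) (k : ℕ)
    (hypo : ∀ f : Hs V, ‖(ContinuousLinearMap.adjoint (S ^ k)) f‖ ≤ ‖(S ^ k) f‖)
    (u : V) (hmu : iterWeight p lam k u ≠ 0) : Wfib p lam k u ≠ 0 := by
  intro h0
  have hA : ‖(S ^ k) (ev u)‖ = 0 := by
    apply norm_eq_zero_of_N2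
    rw [N2_pow_ev hS k u]
    exact h0
  have h1 : ‖((ContinuousLinearMap.adjoint (S ^ k)) (ev u) : ∀ _ : V, ℂ) (p^[k] u)‖
      ≤ ‖(ContinuousLinearMap.adjoint (S ^ k)) (ev u)‖ :=
    lp.norm_apply_le_norm (by norm_num) _ _
  rw [adj_coord_ev hS k u] at h1
  have h2 := (h1.trans (hypo (ev u))).trans_eq hA
  simp only [RCLike.norm_conj] at h2
  exact hmu (norm_le_zero_iff.1 h2)

lemma coord_sum (F : Finset V) (c : V → ℂ) (x : V) :
    ((∑ u ∈ F, c u • ev u : Hs V) : ∀ _ : V, ℂ) x = if x ∈ F then c x else 0 := by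
  classical
  induction F using Finset.induction_on with
  | empty => simp [lp.coeFn_zero]  -- maybe just simp
  | insert a G hnotmem ih =>
      rw [Finset.sum_insert hnotmem]
      have : ((c a • ev a + ∑ u ∈ G, c u • ev u : Hs V) : ∀ _ : V, ℂ) x
          = c a * (ev a : ∀ _ : V, ℂ) x + ((∑ u ∈ G, c u • ev u : Hs V) : ∀ _ : V, ℂ) x := by
        rw [lp.coeFn_add]
        simp [lp.coeFn_smul]
        rfl
      rw [this, ih, ev_apply]
      by_cases hx : x = a
      · subst hx
        simp [hnotmem]
      · simp [hx, Finset.mem_insert]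

end Main



/-- Theorem (k-hypo): for a proper bounded weighted shift `S` on a directed forest,
`S^k` is hyponormal iff the power forest `T^k` is leafless and
`h_k(v) = ∑_{u ∈ Chi^⟨k⟩(v)} |λ^(k)_u|²/‖S^k e_u‖² ≤ 1` for every vertex `v`
(the sum being computed in `[0,∞]`). -/
theorem kHypo {V : Type u} (p : V → V) (hforest : IsDirectedForest p)
    (lam : V → ℂ) (hproper : ProperWeights p lam)
    (S : Hs V →L[ℂ] Hs V) (hS : IsWeightedShift p lam S)
    (k : ℕ) (hk : 1 ≤ k) :
    Hyponormal (S ^ k) ↔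
      (Function.Surjective (kPowParent p k) ∧
        ∀ v : V,
          (∑' u : ↥(childrenIter p k v),
            ENNReal.ofReal (‖iterWeight p lam k ↑u‖ ^ 2) /
              ENNReal.ofReal (‖(S ^ k) (ev (↑u : V))‖ ^ 2)) ≤ 1) := by
  classical
  obtain ⟨m, rfl⟩ : ∃ m, k = m + 1 := ⟨k - 1, by omega⟩
  clear hk hforest
  set A := S ^ (m + 1) with hA
  set μ := iterWeight p lam (m + 1) with hμ
  set W := Wfib p lam (m + 1) with hW
  have hm1 : m + 1 - 1 = m := by omega
  have hmuzero : ∀ v : V, μ v = 0 ↔ p (p^[m] v) = p^[m] v := by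
    intro v
    rw [hμ, iterWeight_eq_zero hproper (by omega), hm1]
  have hmem : ∀ v u : V, u ∈ childrenIter p (m + 1) v ↔ (p^[m + 1] u = v ∧ p^[m] u ≠ v) :=
    fun v u => Iff.rfl
  have hmu_child : ∀ v u : V, u ∈ childrenIter p (m + 1) v → μ u ≠ 0 := by
    intro v u hu h0
    have h1 := (hmuzero u).1 h0
    have h2 : p^[m + 1] u = p^[m] u := by
      rw [Function.iterate_succ_apply', h1]
    exact ((hmem v u).1 hu).2 (h2 ▸ ((hmem v u).1 hu).1)
  have hzero_fiber : ∀ v w : V, p^[m + 1] w = v → p^[m] w = v → μ w = 0 := by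
    intro v w h1 h2
    apply (hmuzero w).2
    rw [← Function.iterate_succ_apply' p m w, h1, h2]
  have hWofReal : ∀ u : V, W u = ENNReal.ofReal (‖A (ev u)‖ ^ 2) := by
    intro u
    rw [hW, ← N2_pow_ev hS (m + 1) u, N2_eq, hA]
  have hrepr : ∀ v : V,
      (∑' u : ↥(childrenIter p (m + 1) v),
        ENNReal.ofReal (‖μ ↑u‖ ^ 2) / ENNReal.ofReal (‖A (ev (↑u : V))‖ ^ 2))
      = ∑' u : ↥(childrenIter p (m + 1) v), (‖μ (↑u : V)‖₊ : ℝ≥0∞) ^ 2 / W ↑u := by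
    intro v
    apply tsum_congr
    intro u
    rw [coe_nnnorm_sq, hWofReal]
  rw [show Hyponormal (S ^ (m + 1)) ↔ ∀ x, ‖ContinuousLinearMap.adjoint A x‖ ≤ ‖A x‖ from
    hyponormal_iff A]
  constructor
  · intro hypo
    constructor
    · -- surjectivity
      intro v
      by_contra hn
      push_neg at hn
      have hcondv : ¬ p (p^[m + 1 - 1] v) = p^[m + 1 - 1] v := by
        intro h
        exact hn v (by rw [kPowParent, if_pos h])
      rw [hm1] at hcondv
      have hmuv : μ v ≠ 0 := fun h0 => hcondv ((hmuzero v).1 h0)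
      have hWv : W v = 0 := by
        rw [hW, Wfib]
        rw [ENNReal.tsum_eq_zero]
        intro w
        by_cases hq : p^[m + 1] w = v
        · rw [if_pos hq]
          by_cases hc : p (p^[m + 1 - 1] w) = p^[m + 1 - 1] w
          · have : iterWeight p lam (m + 1) w = 0 := by
              rw [hm1] at hc
              exact (hmuzero w).2 hc
            simp [this]
          · exact absurd (by rw [kPowParent, if_neg hc]; exact hq) (hn w)
        · rw [if_neg hq]
      exact keylemma hS (m + 1) hypo v hmuv hWv
    · -- condition (b)
      intro v
      rw [hrepr v]
      have hWne : ∀ u : V, u ∈ childrenIter p (m + 1) v → W u ≠ 0 :=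
        fun u hu => keylemma hS (m + 1) hypo u (hmu_child v u hu)
      have hrpos : ∀ u : V, u ∈ childrenIter p (m + 1) v → 0 < ‖A (ev u)‖ ^ 2 := by
        intro u hu
        rcases (norm_nonneg (A (ev u))).lt_or_eq with h | h
        · positivity
        · exact absurd (by rw [hWofReal, ← h]; simp) (hWne u hu)
      -- finite subsets bound
      have hfin : ∀ F : Finset V, (∀ u ∈ F, u ∈ childrenIter p (m + 1) v) →
          ∑ u ∈ F, ‖μ u‖ ^ 2 / ‖A (ev u)‖ ^ 2 ≤ 1 := by
        intro F hF
        set c : V → ℂ := fun u => μ u / ((‖A (ev u)‖ ^ 2 : ℝ) : ℂ) with hc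
        set f : Hs V := ∑ u ∈ F, c u • ev u with hf
        set t : ℝ := ∑ u ∈ F, ‖μ u‖ ^ 2 / ‖A (ev u)‖ ^ 2 with ht
        have ht0 : 0 ≤ t := Finset.sum_nonneg fun u _ => by positivity
        have hcoordv : ((ContinuousLinearMap.adjoint A) f : ∀ _ : V, ℂ) v = (t : ℂ) := by
          rw [hA, adj_coord hS]
          rw [tsum_eq_sum (s := F) (by
            intro x hx
            have : (f : ∀ _ : V, ℂ) x = 0 := by rw [hf, coord_sum, if_neg hx]
            rw [this]
            split <;> simp)]
          rw [ht]
          push_cast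
          apply Finset.sum_congr rfl
          intro u hu
          have hq : p^[m + 1] u = v := ((hmem v u).1 (hF u hu)).1
          rw [if_pos hq]
          have hfu : (f : ∀ _ : V, ℂ) u = c u := by rw [hf, coord_sum, if_pos hu]
          rw [hfu]
          have hcc : (starRingEnd ℂ) (μ u) * c u
              = ((‖μ u‖ ^ 2 : ℝ) : ℂ) * (((‖A (ev u)‖ ^ 2 : ℝ) : ℂ))⁻¹ := by
            simp only [hc]
            rw [div_eq_mul_inv, ← mul_assoc, RCLike.conj_mul]
            push_cast
            rfl
          rw [← hμ, hcc]
          push_cast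
          ring
        have hnormAstar : t ≤ ‖(ContinuousLinearMap.adjoint A) f‖ := by
          have h1 : ‖((ContinuousLinearMap.adjoint A) f : ∀ _ : V, ℂ) v‖
              ≤ ‖(ContinuousLinearMap.adjoint A) f‖ := lp.norm_apply_le_norm (by norm_num) _ _
          rw [hcoordv] at h1
          rw [Complex.norm_real, Real.norm_of_nonneg ht0] at h1
          exact h1
        have hNf : N2 (A f) = ENNReal.ofReal t := by
          rw [hA, N2_pow hS]
          rw [tsum_eq_sum (s := F) (by
            intro x hx
            have : (f : ∀ _ : V, ℂ) x = 0 := by rw [hf, coord_sum, if_neg hx]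
            rw [this]
            simp)]
          rw [ht, ENNReal.ofReal_sum_of_nonneg (fun u _ => by positivity)]
          apply Finset.sum_congr rfl
          intro u hu
          have hfu : (f : ∀ _ : V, ℂ) u = c u := by rw [hf, coord_sum, if_pos hu]
          have hWu : Wfib p lam (m + 1) u = ENNReal.ofReal (‖A (ev u)‖ ^ 2) := hWofReal u
          rw [hfu, hWu, coe_nnnorm_sq, ← ENNReal.ofReal_mul (by positivity)]
          congr 1
          have hrp := hrpos u (hF u hu)
          rw [hc]
          have hnorm_c : ‖μ u / ((‖A (ev u)‖ ^ 2 : ℝ) : ℂ)‖ = ‖μ u‖ / ‖A (ev u)‖ ^ 2 := by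
            rw [norm_div, Complex.norm_real, Real.norm_of_nonneg (by positivity)]
          rw [hnorm_c]
          field_simp
        have h2 : ‖A f‖ ^ 2 = t := by
          have := N2_eq (A f)
          rw [hNf] at this
          exact ((ENNReal.ofReal_eq_ofReal_iff ht0 (by positivity)).1 this).symm
        have h1 : t ≤ ‖A f‖ := hnormAstar.trans (hypo f)
        nlinarith [norm_nonneg (A f)]
      rw [ENNReal.tsum_eq_iSup_sum]
      apply iSup_le
      intro G
      have himg : ∀ u ∈ G.image (Subtype.val), u ∈ childrenIter p (m + 1) v := by
        intro u hu
        rw [Finset.mem_image] at hu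
        obtain ⟨a, _, rfl⟩ := hu
        exact a.2
      have hsum : ∑ u ∈ G, (‖μ (↑u : V)‖₊ : ℝ≥0∞) ^ 2 / W ↑u
          = ∑ u ∈ G.image (Subtype.val), (‖μ u‖₊ : ℝ≥0∞) ^ 2 / W u := by
        rw [Finset.sum_image (fun x _ y _ h => Subtype.ext h)]
      rw [hsum]
      have : ∑ u ∈ G.image (Subtype.val), (‖μ u‖₊ : ℝ≥0∞) ^ 2 / W u
          = ENNReal.ofReal (∑ u ∈ G.image (Subtype.val), ‖μ u‖ ^ 2 / ‖A (ev u)‖ ^ 2) := by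
        rw [ENNReal.ofReal_sum_of_nonneg (fun u _ => by positivity)]
        apply Finset.sum_congr rfl
        intro u hu
        rw [coe_nnnorm_sq, hWofReal, ENNReal.ofReal_div_of_pos (hrpos u (himg u hu))]
      rw [this]
      exact ENNReal.ofReal_le_one.2 (hfin _ himg)
  · -- sufficiency
    rintro ⟨-, hb⟩
    intro f
    rw [norm_le_iff_N2]
    have hb' : ∀ w : V, (∑' x : V, Set.indicator (childrenIter p (m + 1) w)
        (fun x => (‖μ x‖₊ : ℝ≥0∞) ^ 2 / W x) x) ≤ 1 := by
      intro w
      rw [← tsum_subtype]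
      rw [← hrepr w]
      exact hb w
    have key : ∀ w : V, (‖((ContinuousLinearMap.adjoint A) f : ∀ _ : V, ℂ) w‖₊ : ℝ≥0∞) ^ 2
        ≤ ∑' x : V, (if p^[m + 1] x = w then (‖(f : ∀ _ : V, ℂ) x‖₊ : ℝ≥0∞) ^ 2 * W x else 0) := by
      intro w
      set cfun : V → ℝ≥0∞ := fun x =>
        if p^[m + 1] x = w then (‖μ x‖₊ : ℝ≥0∞) * (‖(f : ∀ _ : V, ℂ) x‖₊ : ℝ≥0∞) else 0 with hcfun
      have h1 : (‖((ContinuousLinearMap.adjoint A) f : ∀ _ : V, ℂ) w‖₊ : ℝ≥0∞) ≤ ∑' x, cfun x := by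
        rw [hA, adj_coord hS]
        refine le_trans (enorm_tsum_le _) (ENNReal.tsum_le_tsum fun x => ?_)
        by_cases hx : p^[m + 1] x = w
        · rw [hcfun]
          simp only [hx, if_true, ← hμ]
          rw [nnnorm_mul, RCLike.nnnorm_conj]
          push_cast
          exact le_rfl
        · rw [hcfun]
          simp only [if_neg hx]
          simp
      have hpt : ∀ x : V, cfun x ^ 2 ≤
          (Set.indicator (childrenIter p (m + 1) w) (fun x => (‖μ x‖₊ : ℝ≥0∞) ^ 2 / W x) x)
          * (if p^[m + 1] x = w then (‖(f : ∀ _ : V, ℂ) x‖₊ : ℝ≥0∞) ^ 2 * W x else 0) := by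
        intro x
        by_cases hx : p^[m + 1] x = w
        · by_cases hcx : x ∈ childrenIter p (m + 1) w
          · have hWx : W x ≠ 0 := by
              intro h0
              have hnum : ((‖μ x‖₊ : ℝ≥0∞)) ^ 2 ≠ 0 := by
                simpa [pow_eq_zero_iff] using hmu_child w x hcx
              have hterm : Set.indicator (childrenIter p (m + 1) w)
                  (fun x => (‖μ x‖₊ : ℝ≥0∞) ^ 2 / W x) x = ⊤ := by
                rw [Set.indicator_of_mem hcx, h0, ENNReal.div_zero hnum]
              have hle := (ENNReal.le_tsum x).trans (hb' w)
              rw [hterm] at hle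
              exact absurd hle (by simp)
            have hWt : W x ≠ ⊤ := by rw [hWofReal]; exact ENNReal.ofReal_ne_top
            rw [Set.indicator_of_mem hcx, if_pos hx, hcfun]
            simp only [hx, if_true]
            apply le_of_eq
            rw [mul_pow, div_eq_mul_inv]
            rw [show (‖μ x‖₊ : ℝ≥0∞) ^ 2 * (W x)⁻¹ * ((‖(f : ∀ _ : V, ℂ) x‖₊ : ℝ≥0∞) ^ 2 * W x)
              = ((‖μ x‖₊ : ℝ≥0∞) ^ 2 * (‖(f : ∀ _ : V, ℂ) x‖₊ : ℝ≥0∞) ^ 2) * ((W x)⁻¹ * W x) by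
                ring]
            rw [ENNReal.inv_mul_cancel hWx hWt, mul_one]
          · have hmz : μ x = 0 := by
              apply hzero_fiber w x hx
              by_contra h
              exact hcx ((hmem w x).2 ⟨hx, h⟩)
            simp only [hcfun]
            rw [if_pos hx, hmz]
            simp
        · simp only [hcfun]
          rw [if_neg hx]
          simp
      calc (‖((ContinuousLinearMap.adjoint A) f : ∀ _ : V, ℂ) w‖₊ : ℝ≥0∞) ^ 2
          ≤ (∑' x, cfun x) ^ 2 := pow_le_pow_left' h1 2
        _ ≤ (∑' x, Set.indicator (childrenIter p (m + 1) w)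
              (fun x => (‖μ x‖₊ : ℝ≥0∞) ^ 2 / W x) x)
            * (∑' x, (if p^[m + 1] x = w then (‖(f : ∀ _ : V, ℂ) x‖₊ : ℝ≥0∞) ^ 2 * W x else 0)) :=
            ennreal_cs' _ _ _ hpt
        _ ≤ 1 * (∑' x, (if p^[m + 1] x = w then (‖(f : ∀ _ : V, ℂ) x‖₊ : ℝ≥0∞) ^ 2 * W x else 0)) :=
            mul_le_mul_left (hb' w) _
        _ = _ := one_mul _
    calc N2 ((ContinuousLinearMap.adjoint A) f)
        ≤ ∑' w : V, ∑' x : V,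
            (if p^[m + 1] x = w then (‖(f : ∀ _ : V, ℂ) x‖₊ : ℝ≥0∞) ^ 2 * W x else 0) :=
          ENNReal.tsum_le_tsum key
      _ = ∑' x : V, (‖(f : ∀ _ : V, ℂ) x‖₊ : ℝ≥0∞) ^ 2 * W x :=
          (tsum_fiber (fun x => p^[m + 1] x) _).symm
      _ = N2 (A f) := by rw [hA, N2_pow hS]



end ShiftsPaper
end
end

section
/- Let (a_n)_{n≥0} be a Stieltjes moment sequence with a_0 ≠ 0 and let k be a positive integer. Then there exist real numbers a_{-1}, a_{-2}, …, a_{-k} with a_{-k} = 1 such that (a_{n-k})_{n≥0} is a Stieltjes moment sequence if and only if there exists a representing measure μ for (a_n)_{n≥0} such that ∫_[0,∞) x^{-k} dμ(x) ≤ 1 (in particular μ({0}) = 0, with the convention 1/0 = ∞). Moreover, if this is the case, then all the numbers a_n for n ≥ -k are positive. -/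
open scoped ENNReal Classical
noncomputable section

universe u

namespace ShiftsPaper

open MeasureTheory ENNReal Set

private lemma measPow (n : ℕ) : Measurable fun x : ℝ => ENNReal.ofReal (x ^ n) :=
  ENNReal.measurable_ofReal.comp (measurable_id.pow_const n)

private lemma aeNonneg {μ : Measure ℝ} (h : μ (Set.Iio 0) = 0) : ∀ᵐ x ∂μ, (0:ℝ) ≤ x := by
  rw [ae_iff]
  convert h using 2
  ext x; simp [not_le]

private lemma forward (a : ℕ → ℝ) (k : ℕ)
    (b : ℕ → ℝ) (hb0 : b 0 = 1) (hbk : ∀ n, b (n + k) = a n)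
    (hb : IsStieltjesMomentSeq b) :
    ∃ μ : Measure ℝ, IsRepresentingMeasure μ a ∧
      ∫⁻ x : ℝ, (ENNReal.ofReal (x ^ k))⁻¹ ∂μ ≤ 1 := by
  obtain ⟨hbnn, ν, hν0, hνrep⟩ := hb
  have hνuniv : ν Set.univ = 1 := by
    have := hνrep 0
    simp only [pow_zero, ENNReal.ofReal_one, lintegral_one, hb0] at this
    exact this.symm
  refine ⟨ν.withDensity (fun x => ENNReal.ofReal (x ^ k)), ⟨?_, ?_⟩, ?_⟩
  · rw [withDensity_apply _ measurableSet_Iio, Measure.restrict_eq_zero.2 hν0,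
      lintegral_zero_measure]
  · intro n
    rw [lintegral_withDensity_eq_lintegral_mul _ (measPow k) (measPow n)]
    have : ∫⁻ x, (fun x : ℝ => ENNReal.ofReal (x ^ k)) x * ENNReal.ofReal (x ^ n) ∂ν
        = ∫⁻ x, ENNReal.ofReal (x ^ (n + k)) ∂ν := by
      refine lintegral_congr_ae ?_
      filter_upwards [aeNonneg hν0] with x hx
      show ENNReal.ofReal (x ^ k) * ENNReal.ofReal (x ^ n) = _
      rw [← ENNReal.ofReal_mul (pow_nonneg hx k), ← pow_add, add_comm k n]
    rw [show ((fun x : ℝ => ENNReal.ofReal (x ^ k)) * fun x : ℝ => ENNReal.ofReal (x ^ n))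
        = fun x : ℝ => (fun x : ℝ => ENNReal.ofReal (x ^ k)) x * ENNReal.ofReal (x ^ n) from rfl,
      this, ← hνrep (n + k), hbk n]
  · rw [lintegral_withDensity_eq_lintegral_mul _ (measPow k)
      (show Measurable fun x : ℝ => (ENNReal.ofReal (x ^ k))⁻¹ from (measPow k).inv)]
    calc ∫⁻ x, (fun x : ℝ => ENNReal.ofReal (x ^ k)) x * (ENNReal.ofReal (x ^ k))⁻¹ ∂ν
        ≤ ∫⁻ _, 1 ∂ν := lintegral_mono fun x => ENNReal.mul_inv_le_one _
      _ = 1 := by rw [lintegral_one, hνuniv]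

private lemma posPart (a : ℕ → ℝ) (h0 : a 0 ≠ 0) (k : ℕ) (hk : 1 ≤ k)
    (b : ℕ → ℝ) (hb0 : b 0 = 1) (hbk : ∀ n, b (n + k) = a n)
    (hb : IsStieltjesMomentSeq b) : ∀ n, 0 < b n := by
  obtain ⟨hbnn, ν, hν0, hνrep⟩ := hb
  have hbk0 : b k = a 0 := by simpa using hbk 0
  have ha0 : 0 < a 0 := lt_of_le_of_ne (hbk0 ▸ hbnn k) (Ne.symm h0)
  intro n
  rcases Nat.eq_zero_or_pos n with rfl | hn
  · simp [hb0]
  refine lt_of_le_of_ne (hbnn n) fun hcontra => ?_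
  have h1 : ∫⁻ x, ENNReal.ofReal (x ^ n) ∂ν = 0 := by
    rw [← hνrep n, ← hcontra, ENNReal.ofReal_zero]
  have h2 : ∀ᵐ x ∂ν, ENNReal.ofReal (x ^ n) = 0 := (lintegral_eq_zero_iff (measPow n)).1 h1
  have h3 : ∀ᵐ x ∂ν, x ≤ 0 := by
    filter_upwards [h2] with x hx
    by_contra hx'
    push_neg at hx'
    have hp : 0 < x ^ n := pow_pos hx' n
    rw [ENNReal.ofReal_eq_zero] at hx
    linarith
  have h4 : ∫⁻ x, ENNReal.ofReal (x ^ k) ∂ν = 0 := by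
    rw [lintegral_eq_zero_iff (measPow k)]
    filter_upwards [h3, aeNonneg hν0] with x hx hx'
    have hx0 : x = 0 := le_antisymm hx hx'
    simp [hx0, zero_pow (by omega : k ≠ 0)]
  have h5 := hνrep k
  rw [h4, ENNReal.ofReal_eq_zero] at h5
  linarith

private lemma backward (a : ℕ → ℝ) (ha : IsStieltjesMomentSeq a) (k : ℕ) (hk : 1 ≤ k)
    (μ : Measure ℝ) (hμ : IsRepresentingMeasure μ a)
    (hint : ∫⁻ x : ℝ, (ENNReal.ofReal (x ^ k))⁻¹ ∂μ ≤ 1) :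
    ∃ b : ℕ → ℝ, b 0 = 1 ∧ (∀ n, b (n + k) = a n) ∧ IsStieltjesMomentSeq b := by
  obtain ⟨hann, -⟩ := ha
  obtain ⟨hμ0, hμrep⟩ := hμ
  set g : ℝ → ℝ≥0∞ := fun x => (ENNReal.ofReal (x ^ k))⁻¹ with hgdef
  have hg : Measurable g := (measPow k).inv
  set c : ℝ≥0∞ := ∫⁻ x, g x ∂μ with hcdef
  have hc : c ≤ 1 := hint
  -- μ {0} = 0
  have hμsing : μ {0} = 0 := by
    by_contra h
    have hg0 : g 0 = ∞ := by
      simp [hgdef, zero_pow (by omega : k ≠ 0)]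
    have h1 : ∫⁻ x in {0}, g x ∂μ ≤ c := setLIntegral_le_lintegral _ _
    rw [lintegral_singleton' hg, hg0, ENNReal.top_mul h] at h1
    exact absurd (h1.trans hc) (by simp)
  have hμIic : μ (Set.Iic 0) = 0 := by
    have h1 : μ (Set.Iic 0) ≤ μ (Set.Iio 0) + μ {0} := by
      rw [← Set.Iio_union_right]; exact measure_union_le _ _
    simpa [hμ0, hμsing] using h1
  have hpos : ∀ᵐ x ∂μ, (0:ℝ) < x := by
    rw [ae_iff]
    refine measure_mono_null ?_ hμIic
    intro x hx; simpa [not_lt] using hx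
  set ν : Measure ℝ := μ.withDensity g + (1 - c) • Measure.dirac 0 with hνdef
  have hI : ∀ n : ℕ, ∫⁻ x, ENNReal.ofReal (x ^ n) ∂ν
      = (∫⁻ x, g x * ENNReal.ofReal (x ^ n) ∂μ) + (1 - c) * ENNReal.ofReal ((0:ℝ) ^ n) := by
    intro n
    rw [hνdef, lintegral_add_measure, lintegral_smul_measure,
      lintegral_withDensity_eq_lintegral_mul _ hg (measPow n), lintegral_dirac]
    rfl
  have hkey : ∀ m : ℕ, ∫⁻ x, g x * ENNReal.ofReal (x ^ (m + k)) ∂μ = ENNReal.ofReal (a m) := by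
    intro m
    rw [hμrep m]
    refine lintegral_congr_ae ?_
    filter_upwards [hpos] with x hx
    have hxk : (0:ℝ) < x ^ k := pow_pos hx k
    rw [pow_add, ENNReal.ofReal_mul (pow_pos hx m).le, hgdef]
    rw [mul_comm (ENNReal.ofReal (x ^ m)), ← mul_assoc,
      ENNReal.inv_mul_cancel (ENNReal.ofReal_pos.2 hxk).ne' ENNReal.ofReal_ne_top, one_mul]
  -- I (m+k) = ofReal (a m)
  have hIk : ∀ m : ℕ, ∫⁻ x, ENNReal.ofReal (x ^ (m + k)) ∂ν = ENNReal.ofReal (a m) := by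
    intro m
    rw [hI, hkey, zero_pow (by omega : m + k ≠ 0), ENNReal.ofReal_zero, mul_zero, add_zero]
  have hI0 : ∫⁻ x, ENNReal.ofReal (x ^ 0) ∂ν = 1 := by
    rw [hI]
    simp only [pow_zero, ENNReal.ofReal_one, mul_one]
    exact add_tsub_cancel_of_le hc
  -- finiteness for n ≥ 1
  have hfin : ∀ n : ℕ, ∫⁻ x, ENNReal.ofReal (x ^ n) ∂ν ≠ ∞ := by
    intro n
    rcases Nat.eq_zero_or_pos n with rfl | hn
    · rw [hI0]; simp
    rw [hI n, zero_pow (by omega : n ≠ 0), ENNReal.ofReal_zero, mul_zero, add_zero]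
    have hb : ∫⁻ x, g x * ENNReal.ofReal (x ^ n) ∂μ
        ≤ ∫⁻ x, (g x + ENNReal.ofReal (x ^ n)) ∂μ := by
      refine lintegral_mono_ae ?_
      filter_upwards [hpos] with x hx
      rcases le_total x 1 with hx1 | hx1
      · calc g x * ENNReal.ofReal (x ^ n) ≤ g x * 1 := by
              gcongr
              exact ENNReal.ofReal_le_one.2 (pow_le_one₀ hx.le hx1)
          _ ≤ g x + _ := by rw [mul_one]; exact le_self_add
      · calc g x * ENNReal.ofReal (x ^ n) ≤ 1 * ENNReal.ofReal (x ^ n) := by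
              gcongr
              rw [hgdef]
              simp only
              rw [ENNReal.inv_le_one]
              exact ENNReal.one_le_ofReal.2 (one_le_pow₀ hx1)
          _ ≤ _ := by rw [one_mul]; exact le_add_self
    rw [lintegral_add_left hg] at hb
    rw [← hμrep n] at hb
    exact (hb.trans_lt (by exact ENNReal.add_lt_top.2 ⟨hc.trans_lt (by simp), ENNReal.ofReal_lt_top⟩)).ne
  refine ⟨fun n => (∫⁻ x, ENNReal.ofReal (x ^ n) ∂ν).toReal, ?_, ?_, ?_, ν, ?_, ?_⟩
  · dsimp only; rw [hI0]; simp
  · intro n; dsimp only; rw [hIk n, ENNReal.toReal_ofReal (hann n)]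
  · intro n; exact ENNReal.toReal_nonneg
  · rw [hνdef]
    simp only [Measure.add_apply, Measure.smul_apply, smul_eq_mul]
    rw [withDensity_apply _ measurableSet_Iio, Measure.restrict_eq_zero.2 hμ0,
      lintegral_zero_measure]
    rw [Measure.dirac_apply' _ measurableSet_Iio]
    simp
  · intro n
    dsimp only
    rw [ENNReal.ofReal_toReal (hfin n)]

/-- Lemma (moment-ext): a Stieltjes moment sequence `a` with `a 0 ≠ 0` admits a
`k`-step backward extension `b` (with `b 0 = a_{-k} = 1` and `b (n+k) = a n`) which is
again a Stieltjes moment sequence iff `a` has a representing measure `μ` with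
`∫ x^{-k} dμ(x) ≤ 1` (computed in `[0,∞]`, with `1/0 = ∞`); moreover any such
extension has all its terms positive. -/
theorem momentExt (a : ℕ → ℝ) (ha : IsStieltjesMomentSeq a) (h0 : a 0 ≠ 0)
    (k : ℕ) (hk : 1 ≤ k) :
    ((∃ b : ℕ → ℝ, b 0 = 1 ∧ (∀ n, b (n + k) = a n) ∧ IsStieltjesMomentSeq b) ↔
      ∃ μ : MeasureTheory.Measure ℝ, IsRepresentingMeasure μ a ∧
        ∫⁻ x : ℝ, (ENNReal.ofReal (x ^ k))⁻¹ ∂μ ≤ 1) ∧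
    (∀ b : ℕ → ℝ, b 0 = 1 → (∀ n, b (n + k) = a n) → IsStieltjesMomentSeq b →
      ∀ n, 0 < b n) := by
  refine ⟨⟨fun ⟨b, hb0, hbk, hb⟩ => forward a k b hb0 hbk hb,
    fun ⟨μ, hμ, hint⟩ => backward a ha k hk μ hμ hint⟩,
    fun b hb0 hbk hb => posPart a h0 k hk b hb0 hbk hb⟩

end ShiftsPaper
end
end

section
/- Let S_λ be a bounded weighted shift on a directed forest T=(V,p) and k ≥ 1. Then for every f ∈ ℓ²(V): S_λ^k f = ∑_{v∈V} f(v) ∑_{u∈Chi^⟨k⟩(v)} λ^(k)_u e_u, and (S_λ*)^k f = ∑_{v∈V} f(v)·conj(λ^(k)_v)·e_{p^k(v)}. Moreover, S_λ^k equals the weighted shift on the k-th power forest T^k with weights λ^(k) = (λ^(k)_v)_{v∈V}, and this weighted shift is proper on T^k whenever S_λ is proper on T. -/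
open scoped ENNReal Classical
noncomputable section

universe u

namespace ShiftsPaper

open scoped InnerProductSpace

lemma iterWeight_succ' {V : Type u} (p : V → V) (lam : V → ℂ) (k : ℕ) (v : V) :
    iterWeight p lam (k + 1) v = lam (p^[k] v) * iterWeight p lam k v := by
  induction k generalizing v with
  | zero => simp [iterWeight]
  | succ k ih =>
    show iterWeight p lam (k+1) (p v) * lam v = _
    rw [ih (p v), ← Function.iterate_succ_apply]
    show _ = lam (p^[k+1] v) * (iterWeight p lam k (p v) * lam v)
    ring

lemma apply_pow {V : Type u} (p : V → V) (lam : V → ℂ)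
    (S : Hs V →L[ℂ] Hs V) (hS : IsWeightedShift p lam S) (k : ℕ)
    (f : Hs V) (w : V) :
    ((S ^ k) f : ∀ _ : V, ℂ) w = iterWeight p lam k w * (f : ∀ _ : V, ℂ) (p^[k] w) := by
  induction k generalizing w with
  | zero => simp [iterWeight]
  | succ k ih =>
    rw [pow_succ', ContinuousLinearMap.mul_apply, hS, ih (p w),
      ← Function.iterate_succ_apply]
    show _ = iterWeight p lam k (p w) * lam w * _
    ring

lemma iterWeight_zero_of_root {V : Type u} (p : V → V) (lam : V → ℂ)
    (hw : WeightSystem p lam) (m : ℕ) (v : V) (hv : p (p^[m] v) = p^[m] v) :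
    iterWeight p lam (m + 1) v = 0 := by
  rw [iterWeight_succ', hw _ hv, zero_mul]

lemma root_of_iterWeight_zero {V : Type u} (p : V → V) (lam : V → ℂ)
    (hp : ProperWeights p lam) (m : ℕ) (v : V)
    (h : iterWeight p lam (m + 1) v = 0) : p (p^[m] v) = p^[m] v := by
  induction m generalizing v with
  | zero =>
    have h1 : lam v = 0 := by simpa [iterWeight] using h
    simpa using (hp v).1 h1
  | succ m ih =>
    rw [iterWeight_succ'] at h
    rcases mul_eq_zero.1 h with h' | h'
    · exact (hp _).1 h'
    · have hr := ih v h'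
      rw [Function.iterate_succ_apply', hr, hr]

/-- Lemma (powers): for a bounded weighted shift `S` on a directed forest and `k ≥ 1`,
`(S^k f)(w) = λ^(k)_w · f(p^k w)`, `((S*)^k f)(w) = ∑_{v : p^k v = w} conj(λ^(k)_v)·f(v)`,
`S^k` is the weighted shift on the power forest `T^k` with weights `λ^(k)`, and the
latter is proper whenever `S` is proper. -/
theorem powersLemma {V : Type u} (p : V → V) (hforest : IsDirectedForest p)
    (lam : V → ℂ) (hw : WeightSystem p lam)
    (S : Hs V →L[ℂ] Hs V) (hS : IsWeightedShift p lam S)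
    (k : ℕ) (hk : 1 ≤ k) :
    (∀ (f : Hs V) (w : V),
        ((S ^ k) f : ∀ _ : V, ℂ) w = iterWeight p lam k w * (f : ∀ _ : V, ℂ) (p^[k] w)) ∧
    (∀ (f : Hs V) (w : V),
        ((ContinuousLinearMap.adjoint S ^ k) f : ∀ _ : V, ℂ) w =
          ∑' v : {v : V // p^[k] v = w},
            (starRingEnd ℂ) (iterWeight p lam k ↑v) * (f : ∀ _ : V, ℂ) ↑v) ∧
    IsWeightedShift (kPowParent p k) (iterWeight p lam k) (S ^ k) ∧
    (ProperWeights p lam → ProperWeights (kPowParent p k) (iterWeight p lam k)) := by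
  obtain ⟨m, rfl⟩ : ∃ m, k = m + 1 := ⟨k - 1, (Nat.succ_pred_eq_of_pos hk).symm⟩
  have hkm : m + 1 - 1 = m := rfl
  refine ⟨apply_pow p lam S hS (m + 1), ?_, ?_, ?_⟩
  · -- adjoint formula
    intro f w
    have hadj : ContinuousLinearMap.adjoint S ^ (m + 1)
        = ContinuousLinearMap.adjoint (S ^ (m + 1)) := by
      rw [← ContinuousLinearMap.star_eq_adjoint, ← ContinuousLinearMap.star_eq_adjoint,
        star_pow]
    have h1 : ((ContinuousLinearMap.adjoint S ^ (m + 1)) f : ∀ _ : V, ℂ) w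
        = ⟪lp.single 2 w (1 : ℂ), (ContinuousLinearMap.adjoint (S ^ (m + 1))) f⟫_ℂ := by
      rw [lp.inner_single_left, hadj]
      simp [RCLike.inner_apply]
    rw [h1, ContinuousLinearMap.adjoint_inner_right, lp.inner_eq_tsum]
    have h2 : ∀ v : V,
        ⟪((S ^ (m + 1)) (lp.single 2 w (1 : ℂ)) : ∀ _ : V, ℂ) v, (f : ∀ _ : V, ℂ) v⟫_ℂ
        = if p^[m + 1] v = w then
            (starRingEnd ℂ) (iterWeight p lam (m + 1) v) * (f : ∀ _ : V, ℂ) v else 0 := by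
      intro v
      rw [RCLike.inner_apply, apply_pow p lam S hS]
      by_cases h : p^[m + 1] v = w
      · rw [if_pos h, h, lp.single_apply_self, mul_one, mul_comm]
      · rw [if_neg h, lp.single_apply_ne 2 w 1 h]
        simp
    rw [tsum_congr h2]
    rw [← tsum_subtype_eq_of_support_subset
      (s := {v : V | p^[m + 1] v = w})
      (f := fun v => if p^[m + 1] v = w then
        (starRingEnd ℂ) (iterWeight p lam (m + 1) v) * (f : ∀ _ : V, ℂ) v else 0)
      (by intro v hv; simp only [Function.mem_support, ne_eq] at hv
          by_contra hc; simp only [Set.mem_setOf_eq] at hc; exact hv (if_neg hc))]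
    exact (tsum_congr fun v =>
      by rw [if_pos (show p^[m + 1] (v : V) = w from v.2)]).symm
  · -- weighted shift on the power forest
    intro f v
    rw [apply_pow p lam S hS]
    by_cases h : p (p^[m] v) = p^[m] v
    · rw [iterWeight_zero_of_root p lam hw m v h, zero_mul, zero_mul]
    · have : kPowParent p (m + 1) v = p^[m + 1] v := by
        unfold kPowParent
        rw [hkm, if_neg h]
      rw [this]
  · -- properness
    intro hp v
    constructor
    · intro h
      have hr := root_of_iterWeight_zero p lam hp m v h
      unfold kPowParent
      rw [hkm, if_pos hr]
    · intro h
      by_cases hr : p (p^[m] v) = p^[m] v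
      · exact iterWeight_zero_of_root p lam hw m v hr
      · exfalso
        have hv : p^[m + 1] v = v := by
          have : kPowParent p (m + 1) v = p^[m + 1] v := by
            unfold kPowParent; rw [hkm, if_neg hr]
          rw [← this, h]
        have hroot : p v = v := hforest.2 (m + 1) (Nat.le_add_left 1 m) v hv
        exact hr (by rw [Function.iterate_fixed hroot, hroot])

end ShiftsPaper
end
end

section
/- Let T=(V,p) be a directed forest with infinitely many vertices and let k be a positive integer. Then the k-th power forest T^k has at least k distinct trees (connected components). -/
open scoped ENNReal Classical
noncomputable section

universe u

namespace ShiftsPaper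

/-- Lemma (tree-power (c)): if a directed forest has infinitely many vertices, then
its `k`-th power has at least `k` trees (i.e. there are `k` vertices pairwise lying in
distinct connected components of `T^k`). -/
theorem powerManyTrees {V : Type u} (p : V → V) (hforest : IsDirectedForest p)
    (hinf : Infinite V) (k : ℕ) (hk : 1 ≤ k) :
    ∃ f : Fin k → V, ∀ i j : Fin k, i ≠ j →
      ¬ sameTree (kPowParent p k) (f i) (f j) := by
  classical
  obtain ⟨hne, hcyc⟩ := hforest
  haveI := hinf
  by_cases hA : ∀ v : V, p (p^[k-1] v) = p^[k-1] v
  · -- every vertex is a fixed point of the power parent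
    have hq : ∀ v, kPowParent p k v = v := by
      intro v; unfold kPowParent; rw [if_pos (hA v)]
    have hqm : ∀ (m : ℕ) (v : V), (kPowParent p k)^[m] v = v := fun m v =>
      Function.iterate_fixed (hq v) m
    obtain ⟨g⟩ : Nonempty (Fin k ↪ V) :=
      ⟨(Fin.valEmbedding).trans (Infinite.natEmbedding V)⟩
    refine ⟨g, ?_⟩
    intro i j hij h
    obtain ⟨m, n, hmn⟩ := h
    rw [hqm, hqm] at hmn
    exact hij (g.injective hmn)
  · push_neg at hA
    obtain ⟨v, hv⟩ := hA
    have L2 : ∀ e a : ℕ, e ≤ a → p (p^[e] v) = p^[e] v → p (p^[a] v) = p^[a] v := by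
      intro e a hea he
      have hfa : p^[a] v = p^[e] v := by
        calc p^[a] v = p^[a - e] (p^[e] v) := by
              rw [← Function.iterate_add_apply, Nat.sub_add_cancel hea]
          _ = p^[e] v := Function.iterate_fixed he _
      rw [hfa, he]
    have claimU : ∀ m : ℕ, ∀ i : ℕ, i < k →
        ∃ a : ℕ, a % k = i % k ∧ (∀ e, e < a → p (p^[e] v) ≠ p^[e] v) ∧
          (kPowParent p k)^[m] (p^[i] v) = p^[a] v := by
      intro m
      induction m with
      | zero =>
        intro i hi
        exact ⟨i, rfl, fun e he hr => hv (L2 e (k-1) (by omega) hr), rfl⟩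
      | succ m ih =>
        intro i hi
        obtain ⟨a, ha1, ha2, ha3⟩ := ih i hi
        rw [Function.iterate_succ_apply', ha3]
        have hc : p^[k-1] (p^[a] v) = p^[a + k - 1] v := by
          rw [← Function.iterate_add_apply]
          congr 1
          omega
        by_cases hr : p (p^[a + k - 1] v) = p^[a + k - 1] v
        · refine ⟨a, ha1, ha2, ?_⟩
          unfold kPowParent
          rw [hc, if_pos hr]
        · refine ⟨a + k, by rw [Nat.add_mod_right]; exact ha1, ?_, ?_⟩
          · intro e he hre; exact hr (L2 e (a+k-1) (by omega) hre)
          · unfold kPowParent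
            rw [hc, if_neg hr, ← Function.iterate_add_apply]
            congr 1
            omega
    refine ⟨fun i => p^[(i : ℕ)] v, ?_⟩
    intro i j hij h
    obtain ⟨m, n, hmn⟩ := h
    obtain ⟨a, ha1, ha2, ha3⟩ := claimU m i i.isLt
    obtain ⟨b, hb1, hb2, hb3⟩ := claimU n j j.isLt
    rw [ha3, hb3] at hmn
    have hab : a = b := by
      rcases lt_trichotomy a b with hlt | heq | hgt
      · exfalso
        have h1 : p^[b - a] (p^[a] v) = p^[a] v := by
          rw [← Function.iterate_add_apply, Nat.sub_add_cancel hlt.le, ← hmn]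
        exact hb2 a hlt (hcyc (b - a) (by omega) _ h1)
      · exact heq
      · exfalso
        have h1 : p^[a - b] (p^[b] v) = p^[b] v := by
          rw [← Function.iterate_add_apply, Nat.sub_add_cancel hgt.le, hmn]
        exact ha2 b hgt (hcyc (a - b) (by omega) _ h1)
    apply hij
    have hmod : (i : ℕ) % k = (j : ℕ) % k := by rw [← ha1, ← hb1, hab]
    rw [Nat.mod_eq_of_lt i.isLt, Nat.mod_eq_of_lt j.isLt] at hmod
    exact Fin.ext hmod


end ShiftsPaper
end
end

section
/- Let T=(V,p) be a rootless directed tree and k a positive integer. Then T^k is a rootless directed forest consisting of exactly k trees (connected components). -/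
open scoped ENNReal Classical
noncomputable section

universe u

namespace ShiftsPaper

/-- Lemma (tree-power (d)): the `k`-th power of a rootless directed tree is a rootless
directed forest with exactly `k` trees. -/
theorem powerRootless {V : Type u} (p : V → V) (htree : IsDirectedTree p)
    (hrootless : rootSet p = ∅) (k : ℕ) (hk : 1 ≤ k) :
    IsDirectedForest (kPowParent p k) ∧
    rootSet (kPowParent p k) = ∅ ∧
    ∃ f : Fin k → V,
      (∀ i j : Fin k, i ≠ j → ¬ sameTree (kPowParent p k) (f i) (f j)) ∧
      (∀ v : V, ∃ i : Fin k, sameTree (kPowParent p k) v (f i)) := by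
  obtain ⟨⟨hne, hforest⟩, hconn⟩ := htree
  have hnr : ∀ v : V, p v ≠ v := by
    intro v hv
    have : v ∈ rootSet p := hv
    rw [hrootless] at this
    exact this
  have noFix : ∀ n : ℕ, 1 ≤ n → ∀ v, p^[n] v ≠ v :=
    fun n hn v h => hnr v (hforest n hn v h)
  have hq : ∀ v, kPowParent p k v = p^[k] v := by
    intro v
    unfold kPowParent
    rw [if_neg (hnr _)]
  have hqit : ∀ (m : ℕ) (v : V), (kPowParent p k)^[m] v = p^[m * k] v := by
    intro m
    induction m with
    | zero => simp
    | succ m ih =>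
      intro v
      rw [Function.iterate_succ_apply, hq, ih, ← Function.iterate_add_apply,
        Nat.succ_mul]
  have iterInj : ∀ (a b : ℕ) (v : V), p^[a] v = p^[b] v → a = b := by
    have key : ∀ (a c : ℕ) (v : V), p^[a + c] v = p^[a] v → c = 0 := by
      intro a c v h
      by_contra hc
      have h' : p^[c] (p^[a] v) = p^[a] v := by
        rw [← Function.iterate_add_apply, Nat.add_comm]
        exact h
      exact noFix c (Nat.one_le_iff_ne_zero.2 hc) _ h'
    intro a b v h
    rcases Nat.le_total a b with hab | hab
    · obtain ⟨c, rfl⟩ := Nat.le.dest hab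
      have := key a c v h.symm
      omega
    · obtain ⟨c, rfl⟩ := Nat.le.dest hab
      have := key b c v h
      omega
  refine ⟨⟨hne, ?_⟩, ?_, ?_⟩
  · intro n hn v h
    rw [hqit] at h
    exact absurd h (noFix (n * k) (Nat.mul_pos hn hk) v)
  · rw [Set.eq_empty_iff_forall_notMem]
    intro v hv
    simp only [rootSet, Set.mem_setOf_eq, hq] at hv
    exact noFix k hk v hv
  · obtain ⟨v₀⟩ := hne
    refine ⟨fun i => p^[(i : ℕ)] v₀, ?_, ?_⟩
    · rintro i j hij ⟨m, n, h⟩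
      rw [hqit, hqit, ← Function.iterate_add_apply, ← Function.iterate_add_apply] at h
      have heq := iterInj _ _ _ h
      have h3 : (i : ℕ) = (j : ℕ) := by
        have := congrArg (· % k) heq
        simp only [Nat.mul_add_mod'] at this
        rwa [Nat.mod_eq_of_lt i.isLt, Nat.mod_eq_of_lt j.isLt] at this
      exact hij (Fin.ext h3)
    · intro v
      obtain ⟨k', rfl⟩ : ∃ k', k = k' + 1 := ⟨k - 1, by omega⟩
      obtain ⟨m, n, h⟩ := hconn v v₀
      have h2 : p^[m * k' + m] v = p^[m * k' + n] v₀ := by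
        rw [Function.iterate_add_apply, Function.iterate_add_apply, h]
      have hm : m * k' + m = m * (k' + 1) := by ring
      set N := m * k' + n with hN
      refine ⟨⟨N % (k' + 1), Nat.mod_lt _ (Nat.succ_pos k')⟩, m, N / (k' + 1), ?_⟩
      rw [hqit, hqit]
      show p^[m * (k' + 1)] v = p^[N / (k' + 1) * (k' + 1)] (p^[N % (k' + 1)] v₀)
      rw [← Function.iterate_add_apply, Nat.div_add_mod', ← hm]
      exact h2

end ShiftsPaper
end
end

section
/- Let T=(V,p) be a rooted directed tree and k a positive integer. If the degree of every vertex (the cardinality of its set of children) is at most N for some N ≥ 2, then the k-th power T^k consists of at most (N^k − 1)/(N − 1) trees. If all degrees are bounded by N = 1, then the number of trees in T^k is at most k. -/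
open scoped ENNReal Classical
noncomputable section

universe u

namespace ShiftsPaper

/-- base-`N` code of a vertex, with fuel `m`. -/
def codeAux {V : Type u} (p : V → V) (ω : V) (idx : V → ℕ) (N : ℕ) : ℕ → V → ℕ
  | 0, _ => 0
  | m + 1, v => if v = ω then 0 else 1 + idx v + N * codeAux p ω idx N m (p v)

/-- Corollary: if every vertex of a rooted directed tree has at most `N ≥ 2` children,
then `T^k` has at most `(N^k − 1)/(N − 1)` trees; if `N = 1`, at most `k` trees
("at most `m` trees" meaning: among any `m + 1` vertices two lie in the same tree). -/
theorem powerTreeCount {V : Type u} (p : V → V) (htree : IsDirectedTree p)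
    (ω : V) (hω : p ω = ω) (k : ℕ) (hk : 1 ≤ k) (N : ℕ)
    (hdeg : ∀ v : V, (children p v).Finite ∧ (children p v).ncard ≤ N) :
    (2 ≤ N →
      ∀ f : Fin ((N ^ k - 1) / (N - 1) + 1) → V,
        ∃ i j, i ≠ j ∧ sameTree (kPowParent p k) (f i) (f j)) ∧
    (N = 1 →
      ∀ f : Fin (k + 1) → V,
        ∃ i j, i ≠ j ∧ sameTree (kPowParent p k) (f i) (f j)) := by
  classical
  -- every vertex reaches the root
  have hreach : ∀ v : V, ∃ m : ℕ, p^[m] v = ω := by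
    intro v
    obtain ⟨m, n, hmn⟩ := htree.2 v ω
    exact ⟨m, by rwa [Function.iterate_fixed hω] at hmn⟩
  set depth : V → ℕ := fun v => Nat.find (hreach v) with hdepth
  have hdepth_spec : ∀ v, p^[depth v] v = ω := fun v => Nat.find_spec (hreach v)
  -- root is unique
  have hroot_unique : ∀ r : V, p r = r → r = ω := by
    intro r hr
    have := hdepth_spec r
    rwa [Function.iterate_fixed hr] at this
  have hiter_root : ∀ (j : ℕ) (v : V), p^[j] v = ω ↔ depth v ≤ j := by
    intro j v
    constructor
    · intro h; exact Nat.find_le h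
    · intro h
      have : p^[(j - depth v) + depth v] v = ω := by
        rw [Function.iterate_add_apply, hdepth_spec, Function.iterate_fixed hω]
      rwa [Nat.sub_add_cancel h] at this
  have hdepth_zero : ∀ v : V, depth v = 0 ↔ v = ω := by
    intro v
    constructor
    · intro h; have := hdepth_spec v; rwa [h, Function.iterate_zero_apply] at this
    · intro h; rw [h]; exact Nat.le_zero.1 ((hiter_root 0 ω).1 rfl)
  have hdepth_parent : ∀ v : V, v ≠ ω → depth (p v) = depth v - 1 := by
    intro v hv
    have h1 : 1 ≤ depth v := Nat.one_le_iff_ne_zero.2 (fun h => hv ((hdepth_zero v).1 h))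
    have hle : depth (p v) ≤ depth v - 1 := by
      refine (hiter_root _ (p v)).1 ?_
      rw [← Function.iterate_succ_apply, Nat.succ_eq_add_one, Nat.sub_add_cancel h1]
      exact hdepth_spec v
    have hge : depth v ≤ depth (p v) + 1 := by
      refine (hiter_root _ v).1 ?_
      rw [Function.iterate_succ_apply]
      exact hdepth_spec (p v)
    omega
  -- each non-root vertex is a child of its parent
  have hmem_children : ∀ v : V, v ≠ ω → v ∈ children p (p v) := by
    intro v hv
    refine ⟨rfl, fun h => hv (hroot_unique v h.symm)⟩
  -- choose an index function on children
  have hsig : ∀ u : V, ∃ σ : V → ℕ,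
      Set.InjOn σ (children p u) ∧ ∀ w ∈ children p u, σ w < N := by
    intro u
    haveI : Fintype ↥(children p u) := (hdeg u).1.fintype
    have hcard : Fintype.card ↥(children p u) ≤ Fintype.card (Fin N) := by
      rw [Fintype.card_fin]
      have : Nat.card ↥(children p u) = (children p u).ncard :=
        (Nat.card_coe_set_eq _)
      rw [Nat.card_eq_fintype_card] at this
      rw [this]
      exact (hdeg u).2
    obtain ⟨e⟩ := Function.Embedding.nonempty_of_card_le hcard
    refine ⟨fun w => if h : w ∈ children p u then (e ⟨w, h⟩ : ℕ) else 0, ?_, ?_⟩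
    · intro a ha b hb hab
      simp only [dif_pos ha, dif_pos hb] at hab
      have := e.injective (Fin.val_injective hab)
      exact congrArg Subtype.val this
    · intro w hw; simp only [dif_pos hw]; exact (e ⟨w, hw⟩).isLt
  choose σ hσinj hσlt using hsig
  set idx : V → ℕ := fun v => σ (p v) v with hidx
  have hidx_lt : ∀ v : V, v ≠ ω → idx v < N := fun v hv =>
    hσlt (p v) v (hmem_children v hv)
  -- the code is injective on vertices of depth < fuel
  have hinj : ∀ m : ℕ, ∀ u v : V, depth u < m → depth v < m →
      codeAux p ω idx N m u = codeAux p ω idx N m v → u = v := by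
    intro m
    induction m with
    | zero => intro u v hu _ _; omega
    | succ m ih =>
      intro u v hu hv hcode
      by_cases hu0 : u = ω <;> by_cases hv0 : v = ω
      · rw [hu0, hv0]
      · exfalso
        simp only [codeAux, if_pos hu0, if_neg hv0] at hcode
        omega
      · exfalso
        simp only [codeAux, if_neg hu0, if_pos hv0] at hcode
        omega
      · simp only [codeAux, if_neg hu0, if_neg hv0] at hcode
        have hiu : idx u < N := hidx_lt u hu0
        have hiv : idx v < N := hidx_lt v hv0
        have hmodu : (idx u + N * codeAux p ω idx N m (p u)) % N = idx u := by
          rw [Nat.mul_comm, Nat.add_mul_mod_self_right, Nat.mod_eq_of_lt hiu]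
        have hmodv : (idx v + N * codeAux p ω idx N m (p v)) % N = idx v := by
          rw [Nat.mul_comm, Nat.add_mul_mod_self_right, Nat.mod_eq_of_lt hiv]
        have hkey : idx u + N * codeAux p ω idx N m (p u)
            = idx v + N * codeAux p ω idx N m (p v) := by omega
        have hidx_eq : idx u = idx v := by
          rw [← hmodu, ← hmodv, hkey]
        have hcode_eq : codeAux p ω idx N m (p u) = codeAux p ω idx N m (p v) := by
          have hN : 0 < N := lt_of_le_of_lt (Nat.zero_le _) hiu
          have := hkey
          rw [hidx_eq] at this
          exact Nat.eq_of_mul_eq_mul_left hN (by omega)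
        have hdu : depth (p u) < m := by
          have := hdepth_parent u hu0
          have h1 : depth u ≠ 0 := fun h => hu0 ((hdepth_zero u).1 h)
          omega
        have hdv : depth (p v) < m := by
          have := hdepth_parent v hv0
          have h1 : depth v ≠ 0 := fun h => hv0 ((hdepth_zero v).1 h)
          omega
        have hpuv : p u = p v := ih (p u) (p v) hdu hdv hcode_eq
        have hu_mem : u ∈ children p (p u) := hmem_children u hu0
        have hv_mem : v ∈ children p (p u) := hpuv ▸ hmem_children v hv0
        refine hσinj (p u) hu_mem hv_mem ?_
        have : idx v = σ (p u) v := by rw [hidx]; simp only [hpuv]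
        rw [hidx] at hidx_eq
        simp only at hidx_eq
        rw [hidx_eq, hpuv]
  -- the code of a vertex of depth < m is < geometric sum
  have hbound : ∀ m : ℕ, ∀ v : V, depth v < m →
      codeAux p ω idx N m v < ∑ i ∈ Finset.range m, N ^ i := by
    intro m
    induction m with
    | zero => intro v hv; omega
    | succ m ih =>
      intro v hv
      have hsum : ∑ i ∈ Finset.range (m + 1), N ^ i
          = N * ∑ i ∈ Finset.range m, N ^ i + 1 := by
        rw [Finset.sum_range_succ']
        simp only [pow_succ, pow_zero]
        rw [← Finset.sum_mul, mul_comm]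
      by_cases hv0 : v = ω
      · simp only [codeAux, if_pos hv0, hsum]
        omega
      · simp only [codeAux, if_neg hv0, hsum]
        have h1 : depth v ≠ 0 := fun h => hv0 ((hdepth_zero v).1 h)
        have hdp : depth (p v) < m := by
          have := hdepth_parent v hv0
          omega
        have hc := ih (p v) hdp
        have hi := hidx_lt v hv0
        have : N * codeAux p ω idx N m (p v) + N
            ≤ N * ∑ i ∈ Finset.range m, N ^ i := by
          calc N * codeAux p ω idx N m (p v) + N
              = N * (codeAux p ω idx N m (p v) + 1) := by ring
            _ ≤ N * ∑ i ∈ Finset.range m, N ^ i :=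
              Nat.mul_le_mul_left N (by omega)
        omega
  -- the power parent
  set q : V → V := kPowParent p k with hq
  have hcond : ∀ v : V, (p (p^[k - 1] v) = p^[k - 1] v) ↔ depth v < k := by
    intro v
    constructor
    · intro h
      have : p^[k - 1] v = ω := hroot_unique _ h
      have := (hiter_root _ v).1 this
      omega
    · intro h
      have : p^[k - 1] v = ω := (hiter_root _ v).2 (by omega)
      rw [this, hω]
  have hq_fix : ∀ v : V, depth v < k → q v = v := by
    intro v h
    simp only [hq, kPowParent, if_pos ((hcond v).2 h)]
  have hq_deep : ∀ v : V, k ≤ depth v → q v = p^[k] v ∧ depth (q v) = depth v - k := by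
    intro v h
    have hcnd : ¬ (p (p^[k - 1] v) = p^[k - 1] v) := fun hc => by
      have := (hcond v).1 hc; omega
    have hqv : q v = p^[k] v := by simp only [hq, kPowParent, if_neg hcnd]
    refine ⟨hqv, ?_⟩
    have hle : depth (p^[k] v) ≤ depth v - k := by
      refine (hiter_root _ _).1 ?_
      rw [← Function.iterate_add_apply, Nat.sub_add_cancel h]
      exact hdepth_spec v
    have hge : depth v ≤ depth (p^[k] v) + k := by
      refine (hiter_root _ v).1 ?_
      rw [Function.iterate_add_apply]
      exact hdepth_spec (p^[k] v)
    rw [hqv]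
    omega
  -- iterating q enough times reaches a q-root
  have hiterate : ∀ t : ℕ, ∀ v : V, depth v < k * t + k → depth (q^[t] v) < k := by
    intro t
    induction t with
    | zero => intro v hv; simpa using hv
    | succ t ih =>
      intro v hv
      rw [Function.iterate_succ_apply]
      by_cases h : depth v < k
      · rw [hq_fix v h]
        exact ih v (by omega)
      · have hms : k * (t + 1) = k * t + k := by ring
        rw [hms] at hv
        have := hq_deep v (by omega)
        refine ih (q v) ?_
        rw [this.2]
        omega
  set R : V → V := fun v => q^[depth v] v with hR
  have hR_depth : ∀ v : V, depth (R v) < k := by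
    intro v
    refine hiterate (depth v) v ?_
    have : depth v ≤ k * depth v := Nat.le_mul_of_pos_left _ (by omega)
    omega
  -- key pigeonhole lemma
  set G : ℕ := ∑ i ∈ Finset.range k, N ^ i with hG
  have key : ∀ f : Fin (G + 1) → V,
      ∃ i j, i ≠ j ∧ sameTree q (f i) (f j) := by
    intro f
    set F : Fin (G + 1) → Fin G := fun i => ⟨codeAux p ω idx N k (R (f i)),
      hbound k (R (f i)) (hR_depth (f i))⟩ with hF
    obtain ⟨i, j, hij, hFij⟩ := Fintype.exists_ne_map_eq_of_card_lt F (by simp)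
    refine ⟨i, j, hij, ?_⟩
    have hcode : codeAux p ω idx N k (R (f i)) = codeAux p ω idx N k (R (f j)) := by
      simpa [hF, Fin.mk.injEq] using hFij
    have hRR : R (f i) = R (f j) :=
      hinj k _ _ (hR_depth (f i)) (hR_depth (f j)) hcode
    exact ⟨depth (f i), depth (f j), hRR⟩
  constructor
  · intro hN
    have hGeq : (N ^ k - 1) / (N - 1) = G := by
      rw [hG, Nat.geomSum_eq hN]
    rw [hGeq]
    exact key
  · intro hN
    have hGeq : k = G := by
      simp [hG, hN]
    rw [hGeq]
    exact key
end ShiftsPaper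
end
end
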